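/- Let X be an irreducible, aperiodic, stationary first-order Markov chain on the finite alphabet 𝒳, let g: 𝒳 → 𝒴 and Y_n := g(X_n). Then X is k-lumpable with respect to g if and only if Δ_L^k(X, g) := H(Y_{k+1} | Y_1^k) − H(Y_{k+1} | Y_2^k, X_1) = 0. -/

import Mathlib

open Filter

section MarkovAggregation

variable {𝒳 : Type*} {𝒴 : Type*} [Fintype 𝒳] [DecidableEq 𝒳] [Fintype 𝒴] [DecidableEq 𝒴]

/-- Shannon entropy of a probability mass function on a finite set. -/
noncomputable def entPMF {α : Type*} [Fintype α] (p : α → ℝ) : ℝ :=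
  ∑ a : α, Real.negMulLog (p a)

/-- Marginal of a joint pmf on the first component. -/
noncomputable def margFst {α β : Type*} [Fintype β] (p : α × β → ℝ) : α → ℝ :=
  fun a => ∑ b : β, p (a, b)

/-- Marginal of a joint pmf on the second component. -/
noncomputable def margSnd {α β : Type*} [Fintype α] (p : α × β → ℝ) : β → ℝ :=
  fun b => ∑ a : α, p (a, b)

/-- Conditional Shannon entropy H(A | B) of a joint pmf `p` of the pair (A, B). -/
noncomputable def condEntPMF {α β : Type*} [Fintype α] [Fintype β] (p : α × β → ℝ) : ℝ :=
  entPMF p - entPMF (margSnd p)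

/-- Mutual information I(A ; B) of a joint pmf `p` of the pair (A, B). -/
noncomputable def mutInfPMF {α β : Type*} [Fintype α] [Fintype β] (p : α × β → ℝ) : ℝ :=
  entPMF (margFst p) + entPMF (margSnd p) - entPMF p

/-- Probability that a first-order Markov chain with initial distribution `π` and transition
matrix `P` emits the path (x_0, ..., x_{n-1}). -/
noncomputable def xPath (π : 𝒳 → ℝ) (P : Matrix 𝒳 𝒳 ℝ) (n : ℕ) (x : Fin n → 𝒳) : ℝ :=
  (if h : 0 < n then π (x ⟨0, h⟩) else 1) *
    ∏ i : Fin n, if h : i.val + 1 < n then P (x i) (x ⟨i.val + 1, h⟩) else 1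

/-- Probability that the projection Y_n = g(X_n) emits the path (y_0, ..., y_{n-1}). -/
noncomputable def yPath (π : 𝒳 → ℝ) (P : Matrix 𝒳 𝒳 ℝ) (g : 𝒳 → 𝒴) (n : ℕ)
    (y : Fin n → 𝒴) : ℝ :=
  ∑ x : Fin n → 𝒳, if ∀ i, g (x i) = y i then xPath π P n x else 0

/-- Joint probability of (X_1, (Y_2, ..., Y_{m+1})). -/
noncomputable def xyPath (π : 𝒳 → ℝ) (P : Matrix 𝒳 𝒳 ℝ) (g : 𝒳 → 𝒴) (m : ℕ)
    (x₀ : 𝒳) (y : Fin m → 𝒴) : ℝ :=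
  ∑ x : Fin (m + 1) → 𝒳,
    if x 0 = x₀ ∧ ∀ i : Fin m, g (x i.succ) = y i then xPath π P (m + 1) x else 0

/-- A matrix is primitive iff some power (and all larger powers) of it is entrywise positive;
for a stochastic matrix this is equivalent to being irreducible and aperiodic. -/
def PrimitiveMatrix (P : Matrix 𝒳 𝒳 ℝ) : Prop :=
  ∃ N : ℕ, ∀ n : ℕ, N ≤ n → ∀ i j : 𝒳, 0 < (P ^ n) i j

/-- A Markov chain with transition matrix `P` is `k`-lumpable w.r.t. `g` iff for every initial
distribution `π` the projected process is a `k`-th order Markov chain whose transition matrix `Q`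
does not depend on `π`. -/
def Lumpable (P : Matrix 𝒳 𝒳 ℝ) (g : 𝒳 → 𝒴) (k : ℕ) : Prop :=
  ∃ Q : (Fin k → 𝒴) → 𝒴 → ℝ,
    ∀ π : 𝒳 → ℝ, (∀ x, 0 ≤ π x) → (∑ x, π x = 1) →
      ∀ n : ℕ, ∀ hn : k ≤ n, ∀ y : Fin n → 𝒴, ∀ j : 𝒴,
        yPath π P g (n + 1) (Fin.snoc y j) =
          yPath π P g n y *
            Q (fun i : Fin k => y ⟨n - k + i.val, by have := i.isLt; omega⟩) j

/-- The lumpability cost Δ_L^{k+1}(X, g) = H(Y_{k+2} | Y_1^{k+1}) - H(Y_{k+2} | Y_2^{k+1}, X_1),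
for the stationary chain with invariant distribution `μ` and transition matrix `P`. -/
noncomputable def lumpCost (μ : 𝒳 → ℝ) (P : Matrix 𝒳 𝒳 ℝ) (g : 𝒳 → 𝒴) (k : ℕ) : ℝ :=
  condEntPMF (fun q : 𝒴 × (Fin (k + 1) → 𝒴) => yPath μ P g (k + 2) (Fin.snoc q.2 q.1)) -
  condEntPMF (fun q : 𝒴 × (𝒳 × (Fin k → 𝒴)) =>
    xyPath μ P g (k + 1) q.2.1 (Fin.snoc q.2.2 q.1))

/-- The predictability cost Δ_P^{k+1}(X, g) = I(X_2 ; X_1) - I(Y_{k+2} ; Y_1^{k+1}),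
for the stationary chain with invariant distribution `μ` and transition matrix `P`. -/
noncomputable def predCost (μ : 𝒳 → ℝ) (P : Matrix 𝒳 𝒳 ℝ) (g : 𝒳 → 𝒴) (k : ℕ) : ℝ :=
  mutInfPMF (fun q : 𝒳 × 𝒳 => μ q.1 * P q.1 q.2) -
  mutInfPMF (fun q : 𝒴 × (Fin (k + 1) → 𝒴) => yPath μ P g (k + 2) (Fin.snoc q.2 q.1))

/-- Path probabilities of a stationary `K`-th order Markov chain on `𝒴` with stationary
`K`-dimensional distribution `ρ` and transition matrix `R`. -/
noncomputable def mkvPath {K : ℕ} (ρ : (Fin K → 𝒴) → ℝ) (R : (Fin K → 𝒴) → 𝒴 → ℝ)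
    (n : ℕ) (y : Fin n → 𝒴) : ℝ :=
  if h : K ≤ n then
    ρ (fun i => y ⟨i.val, lt_of_lt_of_le i.isLt h⟩) *
      ∏ m : Fin n, if hm : K ≤ m.val then
        R (fun i => y ⟨m.val - K + i.val, by have h1 := i.isLt; have h2 := m.isLt; omega⟩) (y m)
      else 1
  else
    ∑ z : Fin K → 𝒴, if ∀ i : Fin n, z ⟨i.val, by have := i.isLt; omega⟩ = y i then ρ z else 0

end MarkovAggregation
namespace StmtAux

open Finset
set_option linter.unusedSectionVars false

variable {𝒳 : Type*} {𝒴 : Type*} [Fintype 𝒳] [DecidableEq 𝒳] [Fintype 𝒴] [DecidableEq 𝒴]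

/-- Product of transition weights along a path. -/
noncomputable def xProd (P : Matrix 𝒳 𝒳 ℝ) (n : ℕ) (x : Fin n → 𝒳) : ℝ :=
  ∏ i : Fin n, if h : i.val + 1 < n then P (x i) (x ⟨i.val + 1, h⟩) else 1

lemma xPath_eq (π : 𝒳 → ℝ) (P : Matrix 𝒳 𝒳 ℝ) (n : ℕ) (x : Fin (n+1) → 𝒳) :
    xPath π P (n+1) x = π (x 0) * xProd P (n+1) x := by
  unfold xPath xProd
  rw [dif_pos (Nat.succ_pos n)]
  norm_num [show (⟨0, Nat.succ_pos n⟩ : Fin (n+1)) = 0 from rfl]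

lemma xProd_succ (P : Matrix 𝒳 𝒳 ℝ) (n : ℕ) (x : Fin (n+1) → 𝒳) :
    xProd P (n+1) x = ∏ i : Fin n, P (x i.castSucc) (x i.succ) := by
  unfold xProd
  rw [Fin.prod_univ_castSucc]
  rw [dif_neg (by simp)]
  rw [mul_one]
  apply Finset.prod_congr rfl
  intro i _
  rw [dif_pos (by simp)]
  rfl

lemma xProd_one (P : Matrix 𝒳 𝒳 ℝ) (x : Fin 1 → 𝒳) : xProd P 1 x = 1 := by
  rw [xProd_succ]; simp

lemma xProd_nonneg (P : Matrix 𝒳 𝒳 ℝ) (hP0 : ∀ i j, 0 ≤ P i j) (n : ℕ) (x : Fin n → 𝒳) :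
    0 ≤ xProd P n x := by
  apply Finset.prod_nonneg
  intro i _
  split
  · exact hP0 _ _
  · exact zero_le_one

lemma xPath_nonneg (π : 𝒳 → ℝ) (hπ0 : ∀ x, 0 ≤ π x) (P : Matrix 𝒳 𝒳 ℝ)
    (hP0 : ∀ i j, 0 ≤ P i j) (n : ℕ) (x : Fin n → 𝒳) : 0 ≤ xPath π P n x := by
  apply mul_nonneg
  · split
    · exact hπ0 _
    · exact zero_le_one
  · exact xProd_nonneg P hP0 n x

lemma yPath_nonneg (π : 𝒳 → ℝ) (hπ0 : ∀ x, 0 ≤ π x) (P : Matrix 𝒳 𝒳 ℝ)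
    (hP0 : ∀ i j, 0 ≤ P i j) (g : 𝒳 → 𝒴) (n : ℕ) (y : Fin n → 𝒴) : 0 ≤ yPath π P g n y := by
  apply Finset.sum_nonneg
  intro x _
  split
  · exact xPath_nonneg π hπ0 P hP0 n x
  · exact le_refl 0

/-- `tl z m v` : probability that, starting from `z`, the next `m` steps project to `v`. -/
noncomputable def tl (P : Matrix 𝒳 𝒳 ℝ) (g : 𝒳 → 𝒴) (z : 𝒳) (m : ℕ) (v : Fin m → 𝒴) : ℝ :=
  ∑ w : Fin (m+1) → 𝒳, if w 0 = z ∧ ∀ i : Fin m, g (w i.succ) = v i then xProd P (m+1) w else 0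

lemma tl_nonneg (P : Matrix 𝒳 𝒳 ℝ) (hP0 : ∀ i j, 0 ≤ P i j) (g : 𝒳 → 𝒴) (z : 𝒳) (m : ℕ)
    (v : Fin m → 𝒴) : 0 ≤ tl P g z m v := by
  apply Finset.sum_nonneg
  intro x _
  split
  · exact xProd_nonneg P hP0 _ x
  · exact le_refl 0

lemma tl_zero (P : Matrix 𝒳 𝒳 ℝ) (g : 𝒳 → 𝒴) (z : 𝒳) (v : Fin 0 → 𝒴) :
    tl P g z 0 v = 1 := by
  unfold tl
  rw [← Equiv.sum_comp (Equiv.funUnique (Fin 1) 𝒳).symm]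
  simp [Equiv.funUnique, xProd_one]


lemma xProd_cons (P : Matrix 𝒳 𝒳 ℝ) (m : ℕ) (z : 𝒳) (q : Fin (m+1) → 𝒳) :
    xProd P (m+2) (Fin.cons z q) = P z (q 0) * xProd P (m+1) q := by
  rw [xProd_succ, xProd_succ, Fin.prod_univ_succ]
  simp [← Fin.succ_castSucc]

lemma tl_succ (P : Matrix 𝒳 𝒳 ℝ) (g : 𝒳 → 𝒴) (z : 𝒳) (m : ℕ) (v : Fin (m+1) → 𝒴) :
    tl P g z (m+1) v
      = ∑ z' : 𝒳, (if g z' = v 0 then P z z' else 0) * tl P g z' m (Fin.tail v) := by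
  have hM : tl P g z (m+1) v
      = ∑ q : Fin (m+1) → 𝒳, if (∀ i : Fin (m+1), g (q i) = v i)
          then P z (q 0) * xProd P (m+1) q else 0 := by
    unfold tl
    rw [← Equiv.sum_comp (Fin.consEquiv (fun _ : Fin (m+2) => 𝒳))]
    rw [Fintype.sum_prod_type]
    rw [Finset.sum_comm]
    have : ∀ q : Fin (m+1) → 𝒳, ∀ x : 𝒳,
        (if (Fin.consEquiv (fun _ : Fin (m+2) => 𝒳)) (x, q) 0 = z ∧
            (∀ i : Fin (m+1), g ((Fin.consEquiv (fun _ : Fin (m+2) => 𝒳)) (x, q) i.succ) = v i)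
          then xProd P (m+2) ((Fin.consEquiv (fun _ : Fin (m+2) => 𝒳)) (x, q)) else 0)
        = if x = z then (if (∀ i : Fin (m+1), g (q i) = v i)
            then P z (q 0) * xProd P (m+1) q else 0) else 0 := by
      intro q x
      simp only [Fin.consEquiv_apply, Fin.cons_zero, Fin.cons_succ]
      rcases eq_or_ne x z with rfl | hx
      · by_cases hq : ∀ i : Fin (m+1), g (q i) = v i <;>
          simp [hq, Fin.consEquiv, xProd_cons]
      · simp [hx]
    simp only [this]
    apply Finset.sum_congr rfl
    intro q _
    rw [Fintype.sum_ite_eq' z]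
  rw [hM]
  have hR : ∀ z' : 𝒳, (if g z' = v 0 then P z z' else 0) * tl P g z' m (Fin.tail v)
      = ∑ q : Fin (m+1) → 𝒳, if q 0 = z' then
          (if (∀ i : Fin (m+1), g (q i) = v i) then P z (q 0) * xProd P (m+1) q else 0) else 0 := by
    intro z'
    unfold tl
    rw [Finset.mul_sum]
    apply Finset.sum_congr rfl
    intro q _
    have hsplit : (∀ i : Fin (m+1), g (q i) = v i)
        ↔ (g (q 0) = v 0 ∧ ∀ i : Fin m, g (q i.succ) = Fin.tail v i) := by
      rw [Fin.forall_fin_succ]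
      rfl
    by_cases h3 : q 0 = z'
    · subst h3
      by_cases hD : ∀ i : Fin m, g (q i.succ) = Fin.tail v i
      · by_cases hg : g (q 0) = v 0
        · rw [if_pos hg, if_pos ⟨rfl, hD⟩, if_pos rfl, if_pos (hsplit.mpr ⟨hg, hD⟩)]
        · rw [if_neg hg, if_pos rfl, if_neg (fun hC => hg (hsplit.mp hC).1), zero_mul]
      · rw [if_neg (show ¬(q 0 = q 0 ∧ ∀ i : Fin m, g (q i.succ) = Fin.tail v i) from
            fun h => hD h.2), mul_zero, if_pos rfl,
          if_neg (fun hC => hD (hsplit.mp hC).2)]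
    · rw [if_neg (show ¬(q 0 = z' ∧ ∀ i : Fin m, g (q i.succ) = Fin.tail v i) from
            fun h => h3 h.1), mul_zero, if_neg h3]
  simp only [hR]
  rw [Finset.sum_comm]
  apply Finset.sum_congr rfl
  intro q _
  rw [Fintype.sum_ite_eq (q 0)]


lemma tl_sum_one (P : Matrix 𝒳 𝒳 ℝ) (hP1 : ∀ i, ∑ j : 𝒳, P i j = 1) (g : 𝒳 → 𝒴) :
    ∀ (m : ℕ) (z : 𝒳), ∑ v : Fin m → 𝒴, tl P g z m v = 1 := by
  intro m
  induction m with
  | zero =>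
    intro z
    rw [Fintype.sum_unique (fun v : Fin 0 → 𝒴 => tl P g z 0 v)]
    exact tl_zero P g z _
  | succ m ih =>
    intro z
    rw [← Equiv.sum_comp (Fin.consEquiv (fun _ : Fin (m+1) => 𝒴))]
    rw [Fintype.sum_prod_type]
    have hc : ∀ (j : 𝒴) (v : Fin m → 𝒴),
        tl P g z (m+1) ((Fin.consEquiv (fun _ : Fin (m+1) => 𝒴)) (j, v))
        = ∑ z' : 𝒳, (if g z' = j then P z z' else 0) * tl P g z' m v := by
      intro j v
      have : (Fin.consEquiv (fun _ : Fin (m+1) => 𝒴)) (j, v) = Fin.cons j v := rfl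
      rw [this, tl_succ]
      simp [Fin.tail_cons]
    simp only [hc]
    have step : ∀ j : 𝒴,
        ∑ v : Fin m → 𝒴, ∑ z' : 𝒳, (if g z' = j then P z z' else 0) * tl P g z' m v
        = ∑ z' : 𝒳, if g z' = j then P z z' else 0 := by
      intro j
      rw [Finset.sum_comm]
      apply Finset.sum_congr rfl
      intro z' _
      rw [← Finset.mul_sum, ih z', mul_one]
    simp only [step]
    rw [Finset.sum_comm]
    have : ∀ z' : 𝒳, ∑ j : 𝒴, (if g z' = j then P z z' else 0) = P z z' := by
      intro z'
      rw [Fintype.sum_ite_eq (g z')]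
    simp only [this]
    exact hP1 z

lemma fin_tail_snoc {α : Type*} (m : ℕ) (v : Fin (m+1) → α) (j : α) :
    Fin.tail (Fin.snoc v j : Fin (m+2) → α) = (Fin.snoc (Fin.tail v) j : Fin (m+1) → α) := by
  funext i
  rcases Fin.eq_castSucc_or_eq_last i with ⟨i', rfl⟩ | rfl
  · show (Fin.snoc v j : Fin (m+2) → α) (Fin.castSucc i').succ
        = (Fin.snoc (Fin.tail v) j : Fin (m+1) → α) (Fin.castSucc i')
    rw [show (Fin.castSucc i').succ = Fin.castSucc i'.succ from rfl,
      Fin.snoc_castSucc, Fin.snoc_castSucc]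
    rfl
  · show (Fin.snoc v j : Fin (m+2) → α) (Fin.last m).succ
        = (Fin.snoc (Fin.tail v) j : Fin (m+1) → α) (Fin.last m)
    have hl : (Fin.last m).succ = Fin.last (m+1) := by
      apply Fin.ext
      simp
    rw [hl, Fin.snoc_last, Fin.snoc_last]

lemma snoc_zero' {α : Type*} (m : ℕ) (v : Fin (m+1) → α) (j : α) :
    (Fin.snoc v j : Fin (m+2) → α) 0 = v 0 := by
  have : ((0 : Fin (m+2))) = Fin.castSucc 0 := rfl
  rw [this, Fin.snoc_castSucc]

lemma tl_snoc_sum (P : Matrix 𝒳 𝒳 ℝ) (hP1 : ∀ i, ∑ j : 𝒳, P i j = 1) (g : 𝒳 → 𝒴) :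
    ∀ (m : ℕ) (z : 𝒳) (v : Fin m → 𝒴),
    ∑ j : 𝒴, tl P g z (m+1) (Fin.snoc v j) = tl P g z m v := by
  intro m
  induction m with
  | zero =>
    intro z v
    rw [tl_zero]
    have hj : ∀ j : 𝒴, tl P g z 1 (Fin.snoc v j) = ∑ z' : 𝒳, if g z' = j then P z z' else 0 := by
      intro j
      rw [tl_succ]
      have h0 : (Fin.snoc v j : Fin 1 → 𝒴) 0 = j := by
        rw [show (0 : Fin 1) = Fin.last 0 from rfl, Fin.snoc_last]
      rw [h0]
      apply Finset.sum_congr rfl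
      intro z' _
      rw [tl_zero, mul_one]
    simp only [hj]
    rw [Finset.sum_comm]
    have : ∀ z' : 𝒳, ∑ j : 𝒴, (if g z' = j then P z z' else 0) = P z z' := by
      intro z'
      rw [Fintype.sum_ite_eq (g z')]
    simp only [this]
    exact hP1 z
  | succ m ih =>
    intro z v
    have hj : ∀ j : 𝒴, tl P g z (m+2) (Fin.snoc v j)
        = ∑ z' : 𝒳, (if g z' = v 0 then P z z' else 0) * tl P g z' (m+1) (Fin.snoc (Fin.tail v) j) := by
      intro j
      rw [tl_succ, snoc_zero', fin_tail_snoc]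
    simp only [hj]
    rw [Finset.sum_comm]
    have : ∀ z' : 𝒳,
        ∑ j : 𝒴, (if g z' = v 0 then P z z' else 0) * tl P g z' (m+1) (Fin.snoc (Fin.tail v) j)
        = (if g z' = v 0 then P z z' else 0) * tl P g z' m (Fin.tail v) := by
      intro z'
      rw [← Finset.mul_sum, ih z']
    simp only [this]
    exact (tl_succ P g z m v).symm


/-- Head weight: probability of a path of length `m+1` matching `y` and ending at `z`. -/
noncomputable def hdd (π : 𝒳 → ℝ) (P : Matrix 𝒳 𝒳 ℝ) (g : 𝒳 → 𝒴) (m : ℕ)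
    (y : Fin (m+1) → 𝒴) (z : 𝒳) : ℝ :=
  ∑ w : Fin (m+1) → 𝒳,
    if (∀ i, g (w i) = y i) ∧ w (Fin.last m) = z then xPath π P (m+1) w else 0

lemma hdd_nonneg (π : 𝒳 → ℝ) (hπ0 : ∀ x, 0 ≤ π x) (P : Matrix 𝒳 𝒳 ℝ)
    (hP0 : ∀ i j, 0 ≤ P i j) (g : 𝒳 → 𝒴) (m : ℕ) (y : Fin (m+1) → 𝒴) (z : 𝒳) :
    0 ≤ hdd π P g m y z := by
  apply Finset.sum_nonneg
  intro w _
  split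
  · exact xPath_nonneg π hπ0 P hP0 _ w
  · exact le_refl 0

lemma hdd_eq_zero (π : 𝒳 → ℝ) (P : Matrix 𝒳 𝒳 ℝ) (g : 𝒳 → 𝒴) (m : ℕ)
    (y : Fin (m+1) → 𝒴) (z : 𝒳) (h : g z ≠ y (Fin.last m)) : hdd π P g m y z = 0 := by
  apply Finset.sum_eq_zero
  intro w _
  rw [if_neg]
  rintro ⟨hg, rfl⟩
  exact h (hg (Fin.last m))

lemma hdd_zero (π : 𝒳 → ℝ) (P : Matrix 𝒳 𝒳 ℝ) (g : 𝒳 → 𝒴) (y : Fin 1 → 𝒴) (z : 𝒳) :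
    hdd π P g 0 y z = if g z = y 0 then π z else 0 := by
  unfold hdd
  rw [← Equiv.sum_comp (Equiv.funUnique (Fin 1) 𝒳).symm]
  have : ∀ x : 𝒳,
      (if (∀ i : Fin 1, g (((Equiv.funUnique (Fin 1) 𝒳).symm x) i) = y i) ∧
          ((Equiv.funUnique (Fin 1) 𝒳).symm x) (Fin.last 0) = z
        then xPath π P 1 ((Equiv.funUnique (Fin 1) 𝒳).symm x) else 0)
      = if x = z then (if g z = y 0 then π z else 0) else 0 := by
    intro x
    have hx : ((Equiv.funUnique (Fin 1) 𝒳).symm x) = fun _ => x := rfl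
    have hxp : xPath π P 1 (fun _ => x) = π x := by
      rw [xPath_eq, xProd_one, mul_one]
    rw [hx]
    simp only [Fin.forall_fin_one]
    rcases eq_or_ne x z with rfl | hxz
    · simp [hxp]
    · simp [hxz]
  rw [Finset.sum_congr rfl (fun x _ => this x), Fintype.sum_ite_eq' z]

lemma xPath_snoc (π : 𝒳 → ℝ) (P : Matrix 𝒳 𝒳 ℝ) (n : ℕ) (u : Fin (n+1) → 𝒳) (z : 𝒳) :
    xPath π P (n+2) (Fin.snoc u z) = xPath π P (n+1) u * P (u (Fin.last n)) z := by
  rw [xPath_eq, xPath_eq, xProd_succ, xProd_succ, snoc_zero']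
  rw [Fin.prod_univ_castSucc
    (f := fun i : Fin (n+1) => P ((Fin.snoc u z : Fin (n+2) → 𝒳) i.castSucc)
      ((Fin.snoc u z : Fin (n+2) → 𝒳) i.succ))]
  have h1 : ∀ i : Fin n,
      P ((Fin.snoc u z : Fin (n+2) → 𝒳) i.castSucc.castSucc)
        ((Fin.snoc u z : Fin (n+2) → 𝒳) i.castSucc.succ)
      = P (u i.castSucc) (u i.succ) := by
    intro i
    rw [Fin.snoc_castSucc, show (i.castSucc.succ : Fin (n+2)) = (i.succ).castSucc from rfl,
      Fin.snoc_castSucc]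
  have h2 : P ((Fin.snoc u z : Fin (n+2) → 𝒳) (Fin.last n).castSucc)
        ((Fin.snoc u z : Fin (n+2) → 𝒳) (Fin.last n).succ)
      = P (u (Fin.last n)) z := by
    rw [Fin.snoc_castSucc, show ((Fin.last n).succ : Fin (n+2)) = Fin.last (n+1) from
      Fin.ext (by simp), Fin.snoc_last]
  rw [h2, Finset.prod_congr rfl (fun i _ => h1 i)]
  ring

lemma hdd_succ (π : 𝒳 → ℝ) (P : Matrix 𝒳 𝒳 ℝ) (g : 𝒳 → 𝒴) (n : ℕ)
    (y : Fin (n+2) → 𝒴) (z : 𝒳) :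
    hdd π P g (n+1) y z
      = ∑ z' : 𝒳, hdd π P g n (fun i => y i.castSucc) z' *
          (if g z = y (Fin.last (n+1)) then P z' z else 0) := by
  have hM : hdd π P g (n+1) y z
      = ∑ u : Fin (n+1) → 𝒳, if (∀ i : Fin (n+1), g (u i) = y i.castSucc) ∧ g z = y (Fin.last (n+1))
          then xPath π P (n+1) u * P (u (Fin.last n)) z else 0 := by
    unfold hdd
    rw [← Equiv.sum_comp (Fin.snocEquiv (fun _ : Fin (n+2) => 𝒳))]
    rw [Fintype.sum_prod_type]
    rw [Finset.sum_comm]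
    have key : ∀ (u : Fin (n+1) → 𝒳) (x : 𝒳),
        (if (∀ i, g (((Fin.snocEquiv (fun _ : Fin (n+2) => 𝒳)) (x, u)) i) = y i) ∧
            ((Fin.snocEquiv (fun _ : Fin (n+2) => 𝒳)) (x, u)) (Fin.last (n+1)) = z
          then xPath π P (n+2) ((Fin.snocEquiv (fun _ : Fin (n+2) => 𝒳)) (x, u)) else 0)
        = if x = z then (if (∀ i : Fin (n+1), g (u i) = y i.castSucc) ∧ g z = y (Fin.last (n+1))
            then xPath π P (n+1) u * P (u (Fin.last n)) z else 0) else 0 := by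
      intro u x
      have he : ((Fin.snocEquiv (fun _ : Fin (n+2) => 𝒳)) (x, u)) = Fin.snoc u x := by
        funext i
        induction i using Fin.lastCases with
        | last => simp [Fin.snocEquiv, Fin.snoc_last]
        | cast i => simp [Fin.snocEquiv, Fin.snoc_castSucc]
      rw [he]
      have hcond : (∀ i, g ((Fin.snoc u x : Fin (n+2) → 𝒳) i) = y i)
          ↔ ((∀ i : Fin (n+1), g (u i) = y i.castSucc) ∧ g x = y (Fin.last (n+1))) := by
        rw [Fin.forall_fin_succ']
        constructor
        · rintro ⟨h1, h2⟩
          constructor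
          · intro i
            have := h1 i
            rwa [Fin.snoc_castSucc] at this
          · rwa [Fin.snoc_last] at h2
        · rintro ⟨h1, h2⟩
          constructor
          · intro i
            rw [Fin.snoc_castSucc]
            exact h1 i
          · rwa [Fin.snoc_last]
      rw [Fin.snoc_last]
      rcases eq_or_ne x z with rfl | hxz
      · by_cases hc : (∀ i : Fin (n+1), g (u i) = y i.castSucc) ∧ g x = y (Fin.last (n+1))
        · rw [if_pos ⟨hcond.mpr hc, rfl⟩, if_pos rfl, if_pos hc, xPath_snoc]
        · rw [if_neg (fun h => hc (hcond.mp h.1)), if_pos rfl, if_neg hc]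
      · rw [if_neg (fun h => hxz h.2), if_neg hxz]
    simp only [key]
    apply Finset.sum_congr rfl
    intro u _
    rw [Fintype.sum_ite_eq' z]
  rw [hM]
  have hR : ∀ z' : 𝒳, hdd π P g n (fun i => y i.castSucc) z' *
        (if g z = y (Fin.last (n+1)) then P z' z else 0)
      = ∑ u : Fin (n+1) → 𝒳, if u (Fin.last n) = z' then
          (if (∀ i : Fin (n+1), g (u i) = y i.castSucc) ∧ g z = y (Fin.last (n+1))
            then xPath π P (n+1) u * P (u (Fin.last n)) z else 0) else 0 := by
    intro z'
    unfold hdd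
    rw [Finset.sum_mul]
    apply Finset.sum_congr rfl
    intro u _
    by_cases h3 : u (Fin.last n) = z'
    · subst h3
      by_cases hD : ∀ i : Fin (n+1), g (u i) = y i.castSucc
      · by_cases hg : g z = y (Fin.last (n+1))
        · rw [if_pos ⟨hD, rfl⟩, if_pos hg, if_pos rfl, if_pos ⟨hD, hg⟩]
        · rw [if_neg hg, mul_zero, if_pos rfl, if_neg (fun h => hg h.2)]
      · rw [if_neg (show ¬((∀ i : Fin (n+1), g (u i) = (fun i => y i.castSucc) i) ∧
            u (Fin.last n) = u (Fin.last n)) from fun h => hD h.1), zero_mul, if_pos rfl,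
          if_neg (fun h => hD h.1)]
    · rw [if_neg (show ¬((∀ i : Fin (n+1), g (u i) = (fun i => y i.castSucc) i) ∧
          u (Fin.last n) = z') from fun h => h3 h.2), zero_mul, if_neg h3]
  simp only [hR]
  rw [Finset.sum_comm]
  apply Finset.sum_congr rfl
  intro u _
  rw [Fintype.sum_ite_eq (u (Fin.last n))]


lemma yPath_cast (π : 𝒳 → ℝ) (P : Matrix 𝒳 𝒳 ℝ) (g : 𝒳 → 𝒴) {n n' : ℕ} (h : n = n')
    (y : Fin n → 𝒴) :
    yPath π P g n y = yPath π P g n' (fun i => y ⟨i.val, h ▸ i.isLt⟩) := by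
  subst h
  rfl

lemma sum_swap_helper {ι : Type*} [Fintype ι] (H T : ι → ℝ) (c : ι → ι → ℝ) :
    ∑ z : ι, (∑ z' : ι, H z' * c z' z) * T z = ∑ z' : ι, H z' * ∑ z : ι, c z' z * T z := by
  simp only [Finset.sum_mul, Finset.mul_sum]
  rw [Finset.sum_comm]
  simp [mul_assoc]

lemma decomp (π : 𝒳 → ℝ) (P : Matrix 𝒳 𝒳 ℝ) (g : 𝒳 → 𝒴) :
    ∀ (m n : ℕ) (y : Fin (n+1+m) → 𝒴),
      yPath π P g (n+1+m) y
        = ∑ z : 𝒳, hdd π P g n (fun i : Fin (n+1) => y ⟨i.val, by omega⟩) z *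
            tl P g z m (fun i : Fin m => y ⟨n+1+i.val, by omega⟩) := by
  intro m
  induction m with
  | zero =>
    intro n y
    have htl : ∀ z, tl P g z 0 (fun i : Fin 0 => y ⟨n+1+i.val, by omega⟩) = 1 :=
      fun z => tl_zero P g z _
    simp only [htl, mul_one]
    have hy : (fun i : Fin (n+1) => y ⟨i.val, by omega⟩) = y := by
      funext i
      exact congrArg y (Fin.ext rfl)
    rw [hy]
    unfold yPath hdd
    conv_rhs => rw [Finset.sum_comm]
    apply Finset.sum_congr rfl
    intro w _
    by_cases hc : ∀ i, g (w i) = y i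
    · have hz : ∀ z, (if (∀ i, g (w i) = y i) ∧ w (Fin.last n) = z then xPath π P (n+1) w else 0)
          = if w (Fin.last n) = z then xPath π P (n+1) w else 0 := by
        intro z
        by_cases h : w (Fin.last n) = z <;> simp [hc, h]
      rw [if_pos hc, Finset.sum_congr rfl (fun z _ => hz z),
        Fintype.sum_ite_eq (w (Fin.last n))]
    · have hz : ∀ z, (if (∀ i, g (w i) = y i) ∧ w (Fin.last n) = z
          then xPath π P (n+1) w else 0) = 0 := by
        intro z
        rw [if_neg (fun h => hc h.1)]
      rw [if_neg hc, Finset.sum_congr rfl (fun z _ => hz z), Finset.sum_const_zero]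
  | succ m ih =>
    intro n y
    have hcast : n+1+(m+1) = (n+1)+1+m := by omega
    rw [yPath_cast π P g hcast y, ih (n+1)]
    have T1 : (∑ z : 𝒳, hdd π P g (n+1)
          (fun i : Fin (n+1+1) => (fun i' : Fin ((n+1)+1+m) => y ⟨i'.val, by omega⟩)
            ⟨i.val, by omega⟩) z *
          tl P g z m (fun i : Fin m => (fun i' : Fin ((n+1)+1+m) => y ⟨i'.val, by omega⟩)
            ⟨n+1+1+i.val, by omega⟩))
        = ∑ z : 𝒳, (∑ z' : 𝒳, hdd π P g n (fun i : Fin (n+1) => y ⟨i.val, by omega⟩) z' *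
            (if g z = y ⟨n+1, by omega⟩ then P z' z else 0)) *
            tl P g z m (fun i : Fin m => y ⟨n+1+1+i.val, by omega⟩) := by
      apply Finset.sum_congr rfl
      intro z _
      rw [hdd_succ]
      rfl
    rw [T1, sum_swap_helper]
    apply Finset.sum_congr rfl
    intro z' _
    congr 1
    have ht : Fin.tail (fun i : Fin (m+1) => y ⟨n+1+i.val, by omega⟩)
        = fun i : Fin m => y ⟨n+1+1+i.val, by omega⟩ := by
      funext i
      show y ⟨n+1+(i.succ).val, by omega⟩ = y ⟨n+1+1+i.val, by omega⟩
      exact congrArg y (Fin.ext (by simp [Fin.val_succ]; omega))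
    rw [tl_succ]
    apply Finset.sum_congr rfl
    intro zz _
    have hidx : (⟨n+1+((0 : Fin (m+1))).val, by omega⟩ : Fin (n+1+(m+1)))
        = ⟨n+1, by omega⟩ := Fin.ext (by simp)
    congr 1
    exact congrArg (tl P g zz m) ht.symm


lemma yPath_decomp1 (π : 𝒳 → ℝ) (P : Matrix 𝒳 𝒳 ℝ) (g : 𝒳 → 𝒴) (m : ℕ)
    (w : Fin (m+1) → 𝒴) :
    yPath π P g (m+1) w
      = ∑ z : 𝒳, (if g z = w 0 then π z else 0) * tl P g z m (Fin.tail w) := by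
  have hcast : m+1 = 0+1+m := by omega
  rw [yPath_cast π P g hcast w, decomp]
  apply Finset.sum_congr rfl
  intro z _
  congr 1
  · rw [hdd_zero]
    exact congrArg (fun t => if g z = t then π z else 0) (congrArg w (Fin.ext (by simp)))
  · refine congrArg (tl P g z m) ?_
    funext i
    show w ⟨(⟨0+1+i.val, by omega⟩ : Fin (0+1+m)).val, by omega⟩ = w i.succ
    exact congrArg w (Fin.ext (by simp [Nat.add_comm]))

lemma xyPath_tl (π : 𝒳 → ℝ) (P : Matrix 𝒳 𝒳 ℝ) (g : 𝒳 → 𝒴) (m : ℕ) (x₀ : 𝒳)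
    (y : Fin m → 𝒴) :
    xyPath π P g m x₀ y = π x₀ * tl P g x₀ m y := by
  unfold xyPath tl
  rw [Finset.mul_sum]
  apply Finset.sum_congr rfl
  intro x _
  by_cases h : x 0 = x₀ ∧ ∀ i : Fin m, g (x i.succ) = y i
  · rw [if_pos h, if_pos h, xPath_eq, h.1]
  · rw [if_neg h, if_neg h, mul_zero]

lemma pow_apply_nonneg (P : Matrix 𝒳 𝒳 ℝ) (hP0 : ∀ i j, 0 ≤ P i j) :
    ∀ (n : ℕ) (i j : 𝒳), 0 ≤ (P ^ n) i j := by
  intro n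
  induction n with
  | zero =>
    intro i j
    rw [pow_zero, Matrix.one_apply]
    split <;> norm_num
  | succ n ih =>
    intro i j
    rw [pow_succ, Matrix.mul_apply]
    exact Finset.sum_nonneg fun k _ => mul_nonneg (ih i k) (hP0 k j)

lemma mu_pos (P : Matrix 𝒳 𝒳 ℝ) (hP0 : ∀ i j, 0 ≤ P i j) (hprim : PrimitiveMatrix P)
    (μ : 𝒳 → ℝ) (hμ0 : ∀ x, 0 ≤ μ x) (hμ1 : ∑ x : 𝒳, μ x = 1)
    (hμ2 : ∀ j, ∑ i : 𝒳, μ i * P i j = μ j) : ∀ x, 0 < μ x := by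
  obtain ⟨N, hN⟩ := hprim
  have hinv : ∀ (n : ℕ) (j : 𝒳), ∑ i : 𝒳, μ i * (P ^ n) i j = μ j := by
    intro n
    induction n with
    | zero =>
      intro j
      simp only [pow_zero, Matrix.one_apply]
      rw [Finset.sum_congr rfl (fun i _ => by
        rw [show (μ i * if i = j then (1:ℝ) else 0) = if i = j then μ i else 0 by
          split <;> simp])]
      rw [Fintype.sum_ite_eq' j]
    | succ n ih =>
      intro j
      have expand : ∀ i : 𝒳, μ i * (P ^ (n+1)) i j = ∑ k : 𝒳, (μ i * (P ^ n) i k) * P k j := by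
        intro i
        rw [pow_succ, Matrix.mul_apply, Finset.mul_sum]
        exact Finset.sum_congr rfl fun k _ => by ring
      rw [Finset.sum_congr rfl (fun i _ => expand i), Finset.sum_comm]
      rw [Finset.sum_congr rfl (fun k _ => (Finset.sum_mul _ _ _).symm)]
      rw [Finset.sum_congr rfl (fun k _ => by rw [ih k])]
      exact hμ2 j
  have hex : ∃ i₀ : 𝒳, 0 < μ i₀ := by
    by_contra h
    push_neg at h
    have : ∑ x : 𝒳, μ x ≤ 0 := Finset.sum_nonpos fun x _ => h x
    rw [hμ1] at this
    linarith
  obtain ⟨i₀, hi₀⟩ := hex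
  intro x
  rw [← hinv N x]
  have hterm : 0 < μ i₀ * (P ^ N) i₀ x := mul_pos hi₀ (hN N le_rfl i₀ x)
  have hle : μ i₀ * (P ^ N) i₀ x ≤ ∑ i : 𝒳, μ i * (P ^ N) i x :=
    Finset.single_le_sum (fun i _ => mul_nonneg (hμ0 i) (pow_apply_nonneg P hP0 N i x))
      (Finset.mem_univ i₀)
  linarith

end StmtAux

namespace StmtAux

open Finset
set_option linter.unusedSectionVars false

lemma gibbs {ι : Type*} [Fintype ι] (p q : ι → ℝ) (hp : ∀ i, 0 ≤ p i)
    (hq : ∀ i, 0 ≤ q i) (hpq : ∀ i, q i = 0 → p i = 0)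
    (hs : ∑ i, p i = ∑ i, q i) :
    (∑ i, p i * (Real.log (p i) - Real.log (q i)) = 0) ↔ ∀ i, p i = q i := by
  have key : ∀ i, p i - q i ≤ p i * (Real.log (p i) - Real.log (q i)) := by
    intro i
    rcases eq_or_lt_of_le (hp i) with h0 | h0
    · rw [← h0]
      have := hq i
      simp
      linarith
    · have hqi : 0 < q i := lt_of_le_of_ne (hq i) (fun h => by
        have := hpq i h.symm; linarith)
      have hlog : Real.log (q i / p i) ≤ q i / p i - 1 :=
        Real.log_le_sub_one_of_pos (by positivity)
      rw [Real.log_div (ne_of_gt hqi) (ne_of_gt h0)] at hlog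
      have h2 := mul_le_mul_of_nonneg_left hlog (le_of_lt h0)
      have h3 : p i * (q i / p i - 1) = q i - p i := by
        field_simp
      nlinarith
  constructor
  · intro hzero
    have hterm : ∀ i, 0 ≤ p i * (Real.log (p i) - Real.log (q i)) - (p i - q i) :=
      fun i => by linarith [key i]
    have hsum0 : ∑ i, (p i * (Real.log (p i) - Real.log (q i)) - (p i - q i)) = 0 := by
      rw [Finset.sum_sub_distrib, hzero, Finset.sum_sub_distrib, hs]
      ring
    have heach := (Finset.sum_eq_zero_iff_of_nonneg (fun i _ => hterm i)).mp hsum0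
    intro i
    have heq : p i * (Real.log (p i) - Real.log (q i)) = p i - q i := by
      have := heach i (Finset.mem_univ i)
      linarith
    rcases eq_or_lt_of_le (hp i) with h0 | h0
    · rw [← h0] at heq ⊢
      simp at heq
      linarith
    · by_contra hne
      have hqi : 0 < q i := lt_of_le_of_ne (hq i) (fun h => by
        have := hpq i h.symm; linarith)
      have hx : q i / p i ≠ 1 := by
        intro h
        rw [div_eq_one_iff_eq (ne_of_gt h0)] at h
        exact hne h.symm
      have hstrict := Real.log_lt_sub_one_of_pos (show 0 < q i / p i by positivity) hx
      rw [Real.log_div (ne_of_gt hqi) (ne_of_gt h0)] at hstrict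
      have h2 := mul_lt_mul_of_pos_left hstrict h0
      have h3 : p i * (q i / p i - 1) = q i - p i := by field_simp
      nlinarith
  · intro h
    apply Finset.sum_eq_zero
    intro i _
    rw [h i]
    ring

lemma sum_push {γ δ : Type*} [Fintype γ] [Fintype δ] [DecidableEq δ]
    (φ : γ → δ) (r : γ → ℝ) (F : δ → ℝ) :
    ∑ d : δ, (∑ c : γ, if φ c = d then r c else 0) * F d = ∑ c : γ, r c * F (φ c) := by
  have h1 : ∀ d, (∑ c : γ, if φ c = d then r c else 0) * F d
      = ∑ c : γ, if φ c = d then r c * F d else 0 := by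
    intro d
    rw [Finset.sum_mul]
    exact Finset.sum_congr rfl fun c _ => by split <;> simp
  rw [Finset.sum_congr rfl fun d _ => h1 d, Finset.sum_comm]
  apply Finset.sum_congr rfl
  intro c _
  rw [Fintype.sum_ite_eq (φ c) (fun d => r c * F d)]

lemma entPMF_push {γ δ : Type*} [Fintype γ] [Fintype δ] [DecidableEq δ]
    (φ : γ → δ) (r : γ → ℝ) (q : δ → ℝ)
    (hq : ∀ d, q d = ∑ c : γ, if φ c = d then r c else 0) :
    entPMF q = -∑ c : γ, r c * Real.log (q (φ c)) := by
  unfold entPMF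
  have h1 : ∀ d, Real.negMulLog (q d)
      = -((∑ c : γ, if φ c = d then r c else 0) * Real.log (q d)) := by
    intro d
    rw [Real.negMulLog, ← hq d]
    ring
  rw [Finset.sum_congr rfl (fun d _ => h1 d)]
  rw [show (∑ d : δ, -((∑ c : γ, if φ c = d then r c else 0) * Real.log (q d)))
      = -(∑ d : δ, (∑ c : γ, if φ c = d then r c else 0) * Real.log (q d)) by
    rw [← Finset.sum_neg_distrib]]
  rw [sum_push φ r (fun d => Real.log (q d))]

end StmtAux

namespace StmtAux

open Finset
set_option linter.unusedSectionVars false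

section CondEnt

variable {A B C : Type*} [Fintype A] [Fintype B] [Fintype C] [DecidableEq A] [DecidableEq B] [DecidableEq C]

lemma condEnt_push (p : A × C → ℝ) (f : C → B) (hp0 : ∀ x, 0 ≤ p x)
    (hp1 : ∑ x : A × C, p x = 1) :
    (condEntPMF (fun x : A × B => ∑ c : C, if f c = x.2 then p (x.1, c) else 0)
        - condEntPMF p = 0)
      ↔ ∀ (a : A) (c : C),
          p (a, c) * (∑ c' : C, if f c' = f c then (∑ a' : A, p (a', c')) else 0)
            = (∑ a' : A, p (a', c)) * (∑ c' : C, if f c' = f c then p (a, c') else 0) := by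
  set pf : A × B → ℝ := fun x : A × B => ∑ c : C, if f c = x.2 then p (x.1, c) else 0 with hpf
  set mS : C → ℝ := fun c => ∑ a : A, p (a, c) with hmS
  set mSf : B → ℝ := fun b => ∑ c : C, if f c = b then mS c else 0 with hmSf
  -- basic facts
  have hmS0 : ∀ c, 0 ≤ mS c := fun c => Finset.sum_nonneg fun a _ => hp0 _
  have hpf0 : ∀ x : A × B, 0 ≤ pf x := fun x => Finset.sum_nonneg fun c _ => by
    split
    · exact hp0 _
    · exact le_refl 0
  have hmSf0 : ∀ b, 0 ≤ mSf b := fun b => Finset.sum_nonneg fun c _ => by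
    split
    · exact hmS0 c
    · exact le_refl 0
  have hle1 : ∀ a c, p (a, c) ≤ mS c := fun a c =>
    Finset.single_le_sum (f := fun a' => p (a', c)) (fun a' _ => hp0 _) (Finset.mem_univ a)
  have hle2 : ∀ a c, p (a, c) ≤ pf (a, f c) := by
    intro a c
    have h := Finset.single_le_sum (f := fun c' => if f c' = f c then p (a, c') else 0)
      (fun c' _ => by split; exacts [hp0 _, le_refl 0]) (Finset.mem_univ c)
    rw [if_pos rfl] at h
    exact h
  have hle3 : ∀ c, mS c ≤ mSf (f c) := by
    intro c
    have h := Finset.single_le_sum (f := fun c' => if f c' = f c then mS c' else 0)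
      (fun c' _ => by split; exacts [hmS0 _, le_refl 0]) (Finset.mem_univ c)
    rw [if_pos rfl] at h
    exact h
  -- pushforward identities
  have hqpf : ∀ d : A × B, pf d = ∑ x : A × C, if ((x.1, f x.2) : A × B) = d then p x else 0 := by
    intro d
    rw [Fintype.sum_prod_type]
    have h1 : ∀ (a' : A) (c : C), (if ((a', f c) : A × B) = d then p (a', c) else 0)
        = if a' = d.1 then (if f c = d.2 then p (a', c) else 0) else 0 := by
      intro a' c
      by_cases h1 : a' = d.1
      · by_cases h2 : f c = d.2
        · rw [if_pos (by rw [h1, h2]), if_pos h1, if_pos h2]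
        · rw [if_neg (fun h => h2 (by rw [← h])), if_pos h1, if_neg h2]
      · rw [if_neg (fun h => h1 (by rw [← h])), if_neg h1]
    simp only [h1]
    have h2 : ∀ a' : A, (∑ c : C, if a' = d.1 then (if f c = d.2 then p (a', c) else 0) else 0)
        = if a' = d.1 then (∑ c : C, if f c = d.2 then p (a', c) else 0) else 0 := by
      intro a'
      by_cases h : a' = d.1 <;> simp [h]
    simp only [h2]
    rw [Fintype.sum_ite_eq' d.1]
  have hqmSf : ∀ b : B, mSf b = ∑ x : A × C, if f x.2 = b then p x else 0 := by
    intro b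
    rw [Fintype.sum_prod_type, Finset.sum_comm]
    apply Finset.sum_congr rfl
    intro c _
    by_cases h : f c = b <;> simp [h, hmS]
  have hqmS : ∀ c : C, mS c = ∑ x : A × C, if x.2 = c then p x else 0 := by
    intro c
    rw [Fintype.sum_prod_type]
    apply Finset.sum_congr rfl
    intro a _
    rw [Fintype.sum_ite_eq' c (fun c' => p (a, c'))]
  have hmargpf : margSnd pf = mSf := by
    funext b
    rw [show margSnd pf b = ∑ a : A, pf (a, b) from rfl]
    have : ∀ a : A, pf (a, b) = ∑ c : C, if f c = b then p (a, c) else 0 := fun a => rfl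
    simp only [this]
    rw [Finset.sum_comm]
    apply Finset.sum_congr rfl
    intro c _
    by_cases h : f c = b <;> simp [h, hmS]
  have hmargp : margSnd p = mS := rfl
  -- the four entropy identities
  have e1 : entPMF pf = -∑ x : A × C, p x * Real.log (pf (x.1, f x.2)) :=
    entPMF_push (fun x : A × C => ((x.1, f x.2) : A × B)) p pf hqpf
  have e2 : entPMF mSf = -∑ x : A × C, p x * Real.log (mSf (f x.2)) :=
    entPMF_push (fun x : A × C => f x.2) p mSf hqmSf
  have e3 : entPMF mS = -∑ x : A × C, p x * Real.log (mS x.2) :=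
    entPMF_push (fun x : A × C => x.2) p mS hqmS
  have e4 : entPMF p = -∑ x : A × C, p x * Real.log (p x) := by
    unfold entPMF
    rw [show (∑ x : A × C, Real.negMulLog (p x)) = ∑ x : A × C, -(p x * Real.log (p x)) from
      Finset.sum_congr rfl fun x _ => by rw [Real.negMulLog]; ring]
    rw [← Finset.sum_neg_distrib]
  -- the auxiliary pmf q'
  set q' : A × C → ℝ := fun x =>
    if mSf (f x.2) = 0 then 0 else mS x.2 * pf (x.1, f x.2) / mSf (f x.2) with hq'
  have hq'0 : ∀ x, 0 ≤ q' x := by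
    intro x
    rw [hq']
    dsimp only
    split
    · exact le_refl 0
    · exact div_nonneg (mul_nonneg (hmS0 _) (hpf0 _)) (hmSf0 _)
  have hq'p : ∀ x, q' x = 0 → p x = 0 := by
    intro x hx
    rcases x with ⟨a, c⟩
    by_cases h : mSf (f c) = 0
    · have h2 : mS c = 0 := le_antisymm (h ▸ hle3 c) (hmS0 c)
      exact le_antisymm (h2 ▸ hle1 a c) (hp0 _)
    · rw [hq'] at hx
      dsimp only at hx
      rw [if_neg h] at hx
      rcases mul_eq_zero.mp ((div_eq_zero_iff.mp hx).resolve_right h) with h2 | h2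
      · exact le_antisymm (h2 ▸ hle1 a c) (hp0 _)
      · exact le_antisymm (h2 ▸ hle2 a c) (hp0 _)
  have hpfsum : ∀ b : B, ∑ a : A, pf (a, b) = mSf b := by
    intro b
    have : ∀ a : A, pf (a, b) = ∑ c : C, if f c = b then p (a, c) else 0 := fun a => rfl
    simp only [this]
    rw [Finset.sum_comm]
    apply Finset.sum_congr rfl
    intro c _
    by_cases h : f c = b <;> simp [h, hmS]
  have hsq : ∑ x : A × C, p x = ∑ x : A × C, q' x := by
    rw [hp1]
    rw [Fintype.sum_prod_type (f := q'), Finset.sum_comm]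
    have hinner : ∀ c : C, ∑ a : A, q' (a, c) = if mSf (f c) = 0 then 0 else mS c := by
      intro c
      by_cases h : mSf (f c) = 0
      · simp [hq', h]
      · rw [if_neg h]
        have : ∀ a : A, q' (a, c) = mS c * pf (a, f c) / mSf (f c) := by
          intro a
          rw [hq']
          dsimp only
          rw [if_neg h]
        simp only [this]
        rw [← Finset.sum_div, ← Finset.mul_sum, hpfsum (f c)]
        field_simp
    simp only [hinner]
    have : ∀ c : C, (if mSf (f c) = 0 then 0 else mS c) = mS c := by
      intro c
      by_cases h : mSf (f c) = 0
      · rw [if_pos h]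
        exact (le_antisymm (h ▸ hle3 c) (hmS0 c)).symm
      · rw [if_neg h]
    simp only [this]
    rw [← hp1, Fintype.sum_prod_type, Finset.sum_comm]
  -- Δ = relative entropy
  have hΔ : condEntPMF pf - condEntPMF p
      = ∑ x : A × C, p x * (Real.log (p x) - Real.log (q' x)) := by
    unfold condEntPMF
    rw [hmargpf, hmargp, e1, e2, e3, e4]
    rw [show -(∑ x : A × C, p x * Real.log (pf (x.1, f x.2)))
          - -(∑ x : A × C, p x * Real.log (mSf (f x.2)))
          - (-(∑ x : A × C, p x * Real.log (p x)) - -(∑ x : A × C, p x * Real.log (mS x.2)))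
        = ((∑ x : A × C, p x * Real.log (p x)) + (∑ x : A × C, p x * Real.log (mSf (f x.2))))
          - ((∑ x : A × C, p x * Real.log (mS x.2))
            + (∑ x : A × C, p x * Real.log (pf (x.1, f x.2)))) by ring]
    rw [← Finset.sum_add_distrib, ← Finset.sum_add_distrib, ← Finset.sum_sub_distrib]
    apply Finset.sum_congr rfl
    intro x _
    rcases eq_or_lt_of_le (hp0 x) with h0 | h0
    · rw [← h0]
      ring
    · have hmSpos : 0 < mS x.2 := lt_of_lt_of_le h0 (by
        rcases x with ⟨a, c⟩
        exact hle1 a c)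
      have hpfpos : 0 < pf (x.1, f x.2) := lt_of_lt_of_le h0 (by
        rcases x with ⟨a, c⟩
        exact hle2 a c)
      have hmSfpos : 0 < mSf (f x.2) := lt_of_lt_of_le hmSpos (hle3 x.2)
      have hq'x : q' x = mS x.2 * pf (x.1, f x.2) / mSf (f x.2) := by
        rw [hq']
        dsimp only
        rw [if_neg (ne_of_gt hmSfpos)]
      rw [hq'x, Real.log_div (by positivity) (ne_of_gt hmSfpos),
        Real.log_mul (ne_of_gt hmSpos) (ne_of_gt hpfpos)]
      ring
  rw [hΔ, gibbs p q' hp0 hq'0 hq'p hsq]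
  -- final equivalence
  constructor
  · intro h a c
    have hx := h (a, c)
    by_cases hb : mSf (f c) = 0
    · have h2 : mS c = 0 := le_antisymm (hb ▸ hle3 c) (hmS0 c)
      have h3 : p (a, c) = 0 := le_antisymm (h2 ▸ hle1 a c) (hp0 _)
      rw [show (∑ c' : C, if f c' = f c then (∑ a' : A, p (a', c')) else 0) = mSf (f c) from rfl,
        show (∑ a' : A, p (a', c)) = mS c from rfl, h2, h3, hb]
      ring
    · rw [hq'] at hx
      dsimp only at hx
      rw [if_neg hb] at hx
      rw [show (∑ c' : C, if f c' = f c then (∑ a' : A, p (a', c')) else 0) = mSf (f c) from rfl,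
        show (∑ a' : A, p (a', c)) = mS c from rfl,
        show (∑ c' : C, if f c' = f c then p (a, c') else 0) = pf (a, f c) from rfl]
      rw [hx]
      field_simp
  · intro h x
    rcases x with ⟨a, c⟩
    have hx := h a c
    rw [show (∑ c' : C, if f c' = f c then (∑ a' : A, p (a', c')) else 0) = mSf (f c) from rfl,
      show (∑ a' : A, p (a', c)) = mS c from rfl,
      show (∑ c' : C, if f c' = f c then p (a, c') else 0) = pf (a, f c) from rfl] at hx
    by_cases hb : mSf (f c) = 0
    · have h2 : mS c = 0 := le_antisymm (hb ▸ hle3 c) (hmS0 c)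
      have h3 : p (a, c) = 0 := le_antisymm (h2 ▸ hle1 a c) (hp0 _)
      rw [h3, hq']
      dsimp only
      rw [if_pos hb]
    · rw [hq']
      dsimp only
      rw [if_neg hb, ← hx]
      field_simp

end CondEnt

end StmtAux

namespace StmtAux

open Finset
set_option linter.unusedSectionVars false

variable {𝒳 : Type*} {𝒴 : Type*} [Fintype 𝒳] [DecidableEq 𝒳] [Fintype 𝒴] [DecidableEq 𝒴]

lemma cons_eq_iff {k : ℕ} (a : 𝒴) (v : Fin k → 𝒴) (b : Fin (k+1) → 𝒴) :
    Fin.cons a v = b ↔ a = b 0 ∧ v = Fin.tail b := by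
  constructor
  · intro h
    constructor
    · rw [← h, Fin.cons_zero]
    · funext i
      rw [← h]
      rfl
  · rintro ⟨rfl, rfl⟩
    exact Fin.cons_self_tail b

lemma fiber_sum {k : ℕ} (g : 𝒳 → 𝒴) (b : Fin (k+1) → 𝒴) (G : 𝒳 × (Fin k → 𝒴) → ℝ) :
    ∑ c : 𝒳 × (Fin k → 𝒴), (if Fin.cons (g c.1) c.2 = b then G c else 0)
      = ∑ z : 𝒳, if g z = b 0 then G (z, Fin.tail b) else 0 := by
  rw [Fintype.sum_prod_type]
  apply Finset.sum_congr rfl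
  intro z _
  have h1 : ∀ v : Fin k → 𝒴, (if Fin.cons (g z) v = b then G (z, v) else 0)
      = if v = Fin.tail b then (if g z = b 0 then G (z, v) else 0) else 0 := by
    intro v
    by_cases h2 : v = Fin.tail b
    · by_cases h3 : g z = b 0
      · rw [if_pos ((cons_eq_iff _ _ _).mpr ⟨h3, h2⟩), if_pos h2, if_pos h3]
      · rw [if_neg (fun h => h3 ((cons_eq_iff _ _ _).mp h).1), if_pos h2, if_neg h3]
    · rw [if_neg (fun h => h2 ((cons_eq_iff _ _ _).mp h).2), if_neg h2]
  simp only [h1]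
  rw [Fintype.sum_ite_eq' (Fin.tail b)]

lemma snoc_lt_eq {N : ℕ} (y : Fin N → 𝒴) (j : 𝒴) (t : ℕ) (h : t < N) (h2 : t < N + 1) :
    (Fin.snoc y j : Fin (N+1) → 𝒴) ⟨t, h2⟩ = y ⟨t, h⟩ := by
  have : (⟨t, h2⟩ : Fin (N+1)) = Fin.castSucc ⟨t, h⟩ := rfl
  rw [this, Fin.snoc_castSucc]

lemma yPath_delta (P : Matrix 𝒳 𝒳 ℝ) (g : 𝒳 → 𝒴) (x₀ : 𝒳) (m : ℕ) (w : Fin (m+1) → 𝒴) :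
    yPath (fun z => if z = x₀ then (1:ℝ) else 0) P g (m+1) w
      = if g x₀ = w 0 then tl P g x₀ m (Fin.tail w) else 0 := by
  rw [yPath_decomp1]
  have h1 : ∀ z : 𝒳, (if g z = w 0 then (if z = x₀ then (1:ℝ) else 0) else 0) *
        tl P g z m (Fin.tail w)
      = if z = x₀ then (if g x₀ = w 0 then tl P g x₀ m (Fin.tail w) else 0) else 0 := by
    intro z
    by_cases h2 : z = x₀
    · subst h2
      by_cases h3 : g z = w 0
      · rw [if_pos h3, if_pos rfl, if_pos rfl, if_pos h3, one_mul]
      · rw [if_neg h3, if_pos rfl, if_neg h3, zero_mul]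
    · by_cases h3 : g z = w 0
      · rw [if_pos h3, if_neg h2, if_neg h2, zero_mul]
      · rw [if_neg h3, if_neg h2, zero_mul]
  rw [Finset.sum_congr rfl (fun z _ => h1 z), Fintype.sum_ite_eq' x₀]

lemma kernel_of_lumpable (P : Matrix 𝒳 𝒳 ℝ) (g : 𝒳 → 𝒴) (k : ℕ)
    (Q : (Fin (k+1) → 𝒴) → 𝒴 → ℝ)
    (hQ : ∀ π : 𝒳 → ℝ, (∀ x, 0 ≤ π x) → (∑ x, π x = 1) →
      ∀ n : ℕ, ∀ hn : k + 1 ≤ n, ∀ y : Fin n → 𝒴, ∀ j : 𝒴,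
        yPath π P g (n + 1) (Fin.snoc y j) =
          yPath π P g n y *
            Q (fun i : Fin (k+1) => y ⟨n - (k+1) + i.val, by have := i.isLt; omega⟩) j) :
    ∀ (x₀ : 𝒳) (v : Fin k → 𝒴) (j : 𝒴),
      tl P g x₀ (k+1) (Fin.snoc v j) = tl P g x₀ k v * Q (Fin.cons (g x₀) v) j := by
  intro x₀ v j
  set δ : 𝒳 → ℝ := fun z => if z = x₀ then (1:ℝ) else 0 with hδ
  have hδ0 : ∀ x, 0 ≤ δ x := by
    intro x
    rw [hδ]
    dsimp only
    split <;> norm_num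
  have hδ1 : ∑ x : 𝒳, δ x = 1 := by
    rw [hδ, Fintype.sum_ite_eq' x₀ (fun _ => (1:ℝ))]
  set y : Fin (k+1) → 𝒴 := Fin.cons (g x₀) v with hy
  have key := hQ δ hδ0 hδ1 (k+1) le_rfl y j
  have hy0 : y 0 = g x₀ := by rw [hy]; exact Fin.cons_zero _ _
  have hl : yPath δ P g (k+1+1) (Fin.snoc y j) = tl P g x₀ (k+1) (Fin.snoc v j) := by
    rw [yPath_delta, snoc_zero', hy0, if_pos rfl, fin_tail_snoc]
    rw [show Fin.tail y = v from by rw [hy]; exact Fin.tail_cons _ _]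
  have hr : yPath δ P g (k+1) y = tl P g x₀ k v := by
    rw [yPath_delta, hy0, if_pos rfl]
    rw [show Fin.tail y = v from by rw [hy]; exact Fin.tail_cons _ _]
  have hwin : (fun i : Fin (k+1) => y ⟨k + 1 - (k+1) + i.val, by have := i.isLt; omega⟩) = y := by
    funext i
    exact congrArg y (Fin.ext (by simp))
  rw [hl, hr, hwin] at key
  exact key

lemma lumpable_of_kernel (P : Matrix 𝒳 𝒳 ℝ) (g : 𝒳 → 𝒴) (k : ℕ)
    (Q : (Fin (k+1) → 𝒴) → 𝒴 → ℝ)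
    (hker : ∀ (z : 𝒳) (v : Fin k → 𝒴) (j : 𝒴),
      tl P g z (k+1) (Fin.snoc v j) = tl P g z k v * Q (Fin.cons (g z) v) j) :
    Lumpable P g (k+1) := by
  refine ⟨Q, ?_⟩
  intro π hπ0 hπ1 n hn y j
  obtain ⟨a, rfl⟩ : ∃ a, n = a + 1 + k := ⟨n - (k+1), by omega⟩
  set v : Fin k → 𝒴 := fun i => y ⟨a+1+i.val, by omega⟩ with hv
  set y₁ : Fin (a+1) → 𝒴 := fun i => y ⟨i.val, by omega⟩ with hy₁
  -- left side
  have hcast : a+1+k+1 = a+1+(k+1) := by omega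
  have hL : yPath π P g (a+1+k+1) (Fin.snoc y j)
      = ∑ z : 𝒳, hdd π P g a y₁ z * tl P g z (k+1) (Fin.snoc v j) := by
    rw [yPath_cast π P g hcast (Fin.snoc y j), decomp]
    apply Finset.sum_congr rfl
    intro z _
    congr 1
    · refine congrArg (fun t => hdd π P g a t z) ?_
      funext i
      exact snoc_lt_eq y j i.val (by omega) (by omega)
    · refine congrArg (tl P g z (k+1)) ?_
      funext i
      induction i using Fin.lastCases with
      | last =>
        show (Fin.snoc y j : Fin (a+1+k+1) → 𝒴) ⟨a+1+k, by omega⟩ = (Fin.snoc v j : Fin (k+1) → 𝒴) (Fin.last k)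
        rw [show (⟨a+1+k, by omega⟩ : Fin (a+1+k+1)) = Fin.last (a+1+k) from Fin.ext rfl,
          Fin.snoc_last, Fin.snoc_last]
      | cast i' =>
        show (Fin.snoc y j : Fin (a+1+k+1) → 𝒴) ⟨a+1+i'.val, by omega⟩
            = (Fin.snoc v j : Fin (k+1) → 𝒴) (Fin.castSucc i')
        rw [Fin.snoc_castSucc]
        exact snoc_lt_eq y j (a+1+i'.val) (by omega) (by omega)
  have hR : yPath π P g (a+1+k) y = ∑ z : 𝒳, hdd π P g a y₁ z * tl P g z k v := decomp π P g k a y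
  rw [hL, hR]
  -- pointwise rewrite using the kernel and the support of hdd
  have hwin : ∀ z : 𝒳, g z = y₁ (Fin.last a) →
      Fin.cons (g z) v = (fun i : Fin (k+1) => y ⟨a+1+k - (k+1) + i.val, by have := i.isLt; omega⟩) := by
    intro z hz
    funext i
    induction i using Fin.cases with
    | zero =>
      rw [Fin.cons_zero, hz]
      exact congrArg y (Fin.ext (by simp; omega))
    | succ i' =>
      rw [Fin.cons_succ, hv]
      exact congrArg y (Fin.ext (by simp; omega))
  have hpt : ∀ z : 𝒳, hdd π P g a y₁ z * tl P g z (k+1) (Fin.snoc v j)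
      = (hdd π P g a y₁ z * tl P g z k v) *
        Q (fun i : Fin (k+1) => y ⟨a+1+k - (k+1) + i.val, by have := i.isLt; omega⟩) j := by
    intro z
    by_cases hz : g z = y₁ (Fin.last a)
    · rw [hker z v j, hwin z hz]
      ring
    · rw [hdd_eq_zero π P g a y₁ z hz]
      ring
  rw [Finset.sum_congr rfl (fun z _ => hpt z), ← Finset.sum_mul]

end StmtAux


open StmtAux

/-- information-theoretic characterization of lumpability: an irreducible,
aperiodic, stationary first-order Markov chain `X` (invariant distribution `μ`, transition matrix
`P`) is `(k+1)`-lumpable w.r.t. `g` if and only if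
Δ_L^{k+1}(X, g) = H(Y_{k+2} | Y_1^{k+1}) − H(Y_{k+2} | Y_2^{k+1}, X_1) = 0.
(The order of the chain is written as `k+1` so that it ranges over all orders ≥ 1.) -/
theorem stmt4 {𝒳 𝒴 : Type*} [Fintype 𝒳] [DecidableEq 𝒳] [Fintype 𝒴] [DecidableEq 𝒴]
    (P : Matrix 𝒳 𝒳 ℝ) (hP0 : ∀ i j, 0 ≤ P i j) (hP1 : ∀ i, ∑ j : 𝒳, P i j = 1)
    (hprim : PrimitiveMatrix P)
    (μ : 𝒳 → ℝ) (hμ0 : ∀ x, 0 ≤ μ x) (hμ1 : ∑ x : 𝒳, μ x = 1)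
    (hμ2 : ∀ j, ∑ i : 𝒳, μ i * P i j = μ j)
    (g : 𝒳 → 𝒴) (k : ℕ) :
    Lumpable P g (k + 1) ↔ lumpCost μ P g k = 0 := by
  classical
  have hμpos := mu_pos P hP0 hprim μ hμ0 hμ1 hμ2
  set pXJ : 𝒴 × (𝒳 × (Fin k → 𝒴)) → ℝ :=
    fun q => xyPath μ P g (k+1) q.2.1 (Fin.snoc q.2.2 q.1) with hpXJ
  set f : 𝒳 × (Fin k → 𝒴) → (Fin (k+1) → 𝒴) := fun c => Fin.cons (g c.1) c.2 with hf
  have hpt : ∀ (j : 𝒴) (z : 𝒳) (v : Fin k → 𝒴),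
      pXJ (j, (z, v)) = μ z * tl P g z (k+1) (Fin.snoc v j) :=
    fun j z v => xyPath_tl μ P g (k+1) z (Fin.snoc v j)
  have hp0 : ∀ x, 0 ≤ pXJ x := by
    rintro ⟨j, z, v⟩
    rw [hpt]
    exact mul_nonneg (hμ0 z) (tl_nonneg P hP0 g z _ _)
  have hsumj : ∀ (z : 𝒳) (v : Fin k → 𝒴), ∑ j : 𝒴, pXJ (j, (z, v)) = μ z * tl P g z k v := by
    intro z v
    rw [Finset.sum_congr rfl (fun j _ => hpt j z v), ← Finset.mul_sum,
      tl_snoc_sum P hP1 g k z v]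
  have hp1 : ∑ x, pXJ x = 1 := by
    rw [Fintype.sum_prod_type, Finset.sum_comm]
    have h1 : ∀ c : 𝒳 × (Fin k → 𝒴), ∑ j : 𝒴, pXJ (j, c) = μ c.1 * tl P g c.1 k c.2 := by
      rintro ⟨z, v⟩
      exact hsumj z v
    rw [Finset.sum_congr rfl (fun c _ => h1 c), Fintype.sum_prod_type]
    have h2 : ∀ z, ∑ v : Fin k → 𝒴, μ z * tl P g z k v = μ z := by
      intro z
      rw [← Finset.mul_sum, tl_sum_one P hP1 g k z, mul_one]
    rw [Finset.sum_congr rfl (fun z _ => h2 z), hμ1]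
  -- the projected pmf is the pushforward of pXJ
  have hpush : (fun x : 𝒴 × (Fin (k+1) → 𝒴) => yPath μ P g (k+2) (Fin.snoc x.2 x.1))
      = fun x : 𝒴 × (Fin (k+1) → 𝒴) => ∑ c : 𝒳 × (Fin k → 𝒴),
          if f c = x.2 then pXJ (x.1, c) else 0 := by
    funext x
    rcases x with ⟨j, b⟩
    rw [show (∑ c : 𝒳 × (Fin k → 𝒴), if f c = b then pXJ (j, c) else 0)
        = ∑ z : 𝒳, if g z = b 0 then pXJ (j, (z, Fin.tail b)) else 0 from
      fiber_sum g b (fun c => pXJ (j, c))]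
    rw [yPath_decomp1 μ P g (k+1) (Fin.snoc b j), snoc_zero' k b j, fin_tail_snoc k b j]
    apply Finset.sum_congr rfl
    intro z _
    rw [hpt j z (Fin.tail b)]
    by_cases h : g z = b 0 <;> simp [h]
  have hcost : lumpCost μ P g k
      = condEntPMF (fun x : 𝒴 × (Fin (k+1) → 𝒴) => ∑ c : 𝒳 × (Fin k → 𝒴),
          if f c = x.2 then pXJ (x.1, c) else 0) - condEntPMF pXJ := by
    rw [show lumpCost μ P g k
        = condEntPMF (fun x : 𝒴 × (Fin (k+1) → 𝒴) => yPath μ P g (k+2) (Fin.snoc x.2 x.1))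
          - condEntPMF pXJ from rfl, hpush]
  -- abbreviations for the window marginals
  set pB : (Fin (k+1) → 𝒴) → ℝ :=
    fun b => ∑ z : 𝒳, if g z = b 0 then μ z * tl P g z k (Fin.tail b) else 0 with hpB
  set pAB : 𝒴 → (Fin (k+1) → 𝒴) → ℝ :=
    fun j b => ∑ z : 𝒳, if g z = b 0 then μ z * tl P g z (k+1) (Fin.snoc (Fin.tail b) j) else 0
    with hpAB
  have hiff := condEnt_push pXJ f hp0 hp1
  rw [← hcost] at hiff
  -- translate the equality condition
  have hmSf_id : ∀ c : 𝒳 × (Fin k → 𝒴),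
      (∑ c' : 𝒳 × (Fin k → 𝒴), if f c' = f c then (∑ a' : 𝒴, pXJ (a', c')) else 0)
        = pB (f c) := by
    intro c
    rw [fiber_sum g (f c) (fun c' => ∑ a' : 𝒴, pXJ (a', c'))]
    apply Finset.sum_congr rfl
    intro z _
    by_cases h : g z = (f c) 0 <;> simp [h, hsumj]
  have hpf_id : ∀ (a : 𝒴) (c : 𝒳 × (Fin k → 𝒴)),
      (∑ c' : 𝒳 × (Fin k → 𝒴), if f c' = f c then pXJ (a, c') else 0) = pAB a (f c) := by
    intro a c
    rw [fiber_sum g (f c) (fun c' => pXJ (a, c'))]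
    apply Finset.sum_congr rfl
    intro z _
    by_cases h : g z = (f c) 0 <;> simp [h, hpt]
  have hiff2 : lumpCost μ P g k = 0 ↔ ∀ (j : 𝒴) (z : 𝒳) (v : Fin k → 𝒴),
      (μ z * tl P g z (k+1) (Fin.snoc v j)) * pB (Fin.cons (g z) v)
        = (μ z * tl P g z k v) * pAB j (Fin.cons (g z) v) := by
    rw [hiff]
    constructor
    · intro h j z v
      have hx := h j (z, v)
      rw [hmSf_id (z, v), hpf_id j (z, v), hpt j z v,
        show (∑ a' : 𝒴, pXJ (a', (z, v))) = μ z * tl P g z k v from hsumj z v] at hx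
      exact hx
    · intro h a c
      rcases c with ⟨z, v⟩
      rw [hmSf_id (z, v), hpf_id a (z, v), hpt a z v,
        show (∑ a' : 𝒴, pXJ (a', (z, v))) = μ z * tl P g z k v from hsumj z v]
      exact h a z v
  rw [hiff2]
  constructor
  · -- Lumpable → condition
    rintro ⟨Q, hQ⟩ j z v
    have hker := kernel_of_lumpable P g k Q hQ
    have hpABQ : ∀ (j' : 𝒴) (b : Fin (k+1) → 𝒴), pAB j' b = pB b * Q b j' := by
      intro j' b
      rw [hpAB, hpB]
      dsimp only
      rw [Finset.sum_mul]
      apply Finset.sum_congr rfl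
      intro z' _
      by_cases h : g z' = b 0
      · rw [if_pos h, if_pos h, hker z' (Fin.tail b) j',
          show Fin.cons (g z') (Fin.tail b) = b from by rw [h]; exact Fin.cons_self_tail b]
        ring
      · rw [if_neg h, if_neg h, zero_mul]
    rw [hker z v j, hpABQ j (Fin.cons (g z) v)]
    ring
  · -- condition → Lumpable
    intro h
    refine lumpable_of_kernel P g k (fun b j => pAB j b / pB b) ?_
    intro z v j
    by_cases hb : pB (Fin.cons (g z) v) = 0
    · have htl0 : tl P g z k v = 0 := by
        have hterm := (Finset.sum_eq_zero_iff_of_nonneg (fun z' (_ : z' ∈ Finset.univ) => by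
          split
          · exact mul_nonneg (hμ0 z') (tl_nonneg P hP0 g z' _ _)
          · exact le_refl (0:ℝ))).mp hb z (Finset.mem_univ z)
        rw [Fin.cons_zero, if_pos rfl, Fin.tail_cons] at hterm
        rcases mul_eq_zero.mp hterm with h3 | h3
        · exact absurd h3 (ne_of_gt (hμpos z))
        · exact h3
      have htl1 : tl P g z (k+1) (Fin.snoc v j) = 0 := by
        have hle := Finset.single_le_sum
          (f := fun j' => tl P g z (k+1) (Fin.snoc v j'))
          (fun j' _ => tl_nonneg P hP0 g z _ _) (Finset.mem_univ j)
        rw [tl_snoc_sum P hP1 g k z v, htl0] at hle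
        exact le_antisymm hle (tl_nonneg P hP0 g z _ _)
      rw [htl0, htl1, zero_mul]
    · have hx := h j z v
      have h2 : μ z * (tl P g z (k+1) (Fin.snoc v j) * pB (Fin.cons (g z) v))
          = μ z * (tl P g z k v * pAB j (Fin.cons (g z) v)) := by
        linear_combination hx
      have h3 := mul_left_cancel₀ (ne_of_gt (hμpos z)) h2
      rw [← mul_div_assoc, eq_div_iff hb]
      linarith [h3]
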